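/- Let I ⊆ ℝ be an open interval. Let u : I×ℝ → ℂ have continuous partial derivatives up to order one in t and order two in x, let n : I×ℝ → ℝ be continuous, and assume ∂_t u(t,x) = i·∂_x² u(t,x) − i·n(t,x)·u(t,x) for all (t,x) ∈ I×ℝ. Assume that for every compact J ⊆ I there exist C > 0 and δ > 0 such that |u(t,x)| + |∂_x u(t,x)| + |∂_x² u(t,x)| ≤ C·e^{−δ|x|} and |n(t,x)| ≤ C for all t ∈ J, x ∈ ℝ. Let χ : I×ℝ → ℝ be continuously differentiable with χ, ∂_t χ and ∂_x χ bounded on J×ℝ for every compact J ⊆ I. Then the function t ↦ ∫_ℝ |u(t,x)|²·χ(t,x) dx is differentiable on I, with derivative equal to 2·Im ∫_ℝ ∂_x u(t,x)·conj(u(t,x))·∂_x χ(t,x) dx + ∫_ℝ |u(t,x)|²·∂_t χ(t,x) dx. -/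

import Mathlib

open MeasureTheory

namespace ZakharovAux

open Set

lemma integrable_exp_neg_abs {δ : ℝ} (hδ : 0 < δ) :
    Integrable (fun x : ℝ => Real.exp (-δ * |x|)) := by
  have h1 : IntegrableOn (fun x : ℝ => Real.exp (-δ * |x|)) (Ioi 0) := by
    refine (exp_neg_integrableOn_Ioi 0 hδ).congr_fun (fun x hx => ?_) measurableSet_Ioi
    rw [abs_of_nonneg (le_of_lt hx)]
  have h2 : IntegrableOn (fun x : ℝ => Real.exp (-δ * |x|)) (Iic 0) := by
    rw [← Measure.map_neg_eq_self (volume : Measure ℝ)]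
    have m : MeasurableEmbedding fun x : ℝ => -x := (Homeomorph.neg ℝ).measurableEmbedding
    rw [m.integrableOn_map_iff]
    simp_rw [Function.comp_def, abs_neg, neg_preimage, neg_Iic, neg_zero]
    exact Iff.mpr integrableOn_Ici_iff_integrableOn_Ioi h1
  rw [← integrableOn_univ, ← Iic_union_Ioi (a := (0:ℝ))]
  exact h2.union h1

lemma integrable_of_decay {E : Type*} [NormedAddCommGroup E] {f : ℝ → E} {K δ : ℝ}
    (hδ : 0 < δ) (hcont : Continuous f) (hb : ∀ x, ‖f x‖ ≤ K * Real.exp (-δ * |x|)) :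
    Integrable f := by
  refine ((integrable_exp_neg_abs hδ).const_mul K).mono' hcont.aestronglyMeasurable ?_
  filter_upwards with x
  exact hb x

lemma cont_slice {E : Type*} [TopologicalSpace E] {a b : ℝ} {f : ℝ × ℝ → E}
    (hf : ContinuousOn f (Set.Ioo a b ×ˢ Set.univ)) {s : ℝ} (hs : s ∈ Set.Ioo a b) :
    Continuous fun x => f (s, x) := by
  rw [← continuousOn_univ]
  exact hf.comp (Continuous.continuousOn (by fun_prop)) fun x _ => ⟨hs, trivial⟩

lemma exp_abs_le_one {δ : ℝ} (hδ : 0 < δ) (x : ℝ) : Real.exp (-δ * |x|) ≤ 1 := by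
  rw [← Real.exp_zero]
  apply Real.exp_le_exp.mpr
  have := abs_nonneg x
  nlinarith

lemma tendsto_exp_decay_atTop {K δ : ℝ} (hδ : 0 < δ) :
    Filter.Tendsto (fun x : ℝ => K * Real.exp (-δ * |x|)) Filter.atTop (nhds 0) := by
  have h1 : Filter.Tendsto (fun x : ℝ => -δ * |x|) Filter.atTop Filter.atBot := by
    rw [Filter.tendsto_const_mul_atBot_of_neg (neg_lt_zero.mpr hδ)]
    exact Filter.tendsto_abs_atTop_atTop
  simpa using (Real.tendsto_exp_atBot.comp h1).const_mul K

lemma tendsto_exp_decay_atBot {K δ : ℝ} (hδ : 0 < δ) :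
    Filter.Tendsto (fun x : ℝ => K * Real.exp (-δ * |x|)) Filter.atBot (nhds 0) := by
  have h1 : Filter.Tendsto (fun x : ℝ => -δ * |x|) Filter.atBot Filter.atBot := by
    rw [Filter.tendsto_const_mul_atBot_of_neg (neg_lt_zero.mpr hδ)]
    exact Filter.tendsto_abs_atBot_atTop
  simpa using (Real.tendsto_exp_atBot.comp h1).const_mul K

lemma hasDerivAt_normSq_mul {U : ℝ → ℂ} {X : ℝ → ℝ} {s : ℝ} {U' : ℂ} {X' : ℝ}
    (hU : HasDerivAt U U' s) (hX : HasDerivAt X X' s) :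
    HasDerivAt (fun τ => ‖U τ‖^2 * X τ)
      (2 * (U' * (starRingEnd ℂ) (U s)).re * X s + ‖U s‖^2 * X') s := by
  have hUc : HasDerivAt (fun τ => (starRingEnd ℂ) (U τ)) ((starRingEnd ℂ) U') s := hU.star
  have hre := Complex.reCLM.hasFDerivAt.comp_hasDerivAt s (hU.mul hUc)
  have hfun : (fun τ => Complex.reCLM (U τ * (starRingEnd ℂ) (U τ))) = fun τ => ‖U τ‖^2 := by
    funext τ
    simp [Complex.mul_conj, Complex.normSq_eq_norm_sq, ← Complex.ofReal_pow]
  rw [show (⇑Complex.reCLM ∘ (U * fun τ => (starRingEnd ℂ) (U τ))) = fun τ => ‖U τ‖^2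
    from hfun] at hre
  have hval : Complex.reCLM (U' * (starRingEnd ℂ) (U s) + U s * (starRingEnd ℂ) U') =
      2 * (U' * (starRingEnd ℂ) (U s)).re := by
    have : U s * (starRingEnd ℂ) U' = (starRingEnd ℂ) (U' * (starRingEnd ℂ) (U s)) := by
      rw [map_mul]; simp [mul_comm]
    simp [this, Complex.add_re]
    ring
  rw [hval] at hre
  exact hre.mul hX

lemma prod3_bound {x1 x2 x3 c1 c2 c3 e : ℝ} (h1 : x1 ≤ c1 * e) (h2 : x2 ≤ c2 * e)
    (h3 : x3 ≤ c3) (n1 : 0 ≤ x1) (n2 : 0 ≤ x2) (n3 : 0 ≤ x3)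
    (hc1 : 0 ≤ c1) (hc2 : 0 ≤ c2) (hc3 : 0 ≤ c3)
    (he0 : 0 ≤ e) (he1 : e ≤ 1) :
    x1 * x2 * x3 ≤ c1 * c2 * c3 * e := by
  calc x1 * x2 * x3 ≤ (c1 * e) * (c2 * e) * c3 := by gcongr
    _ = (c1 * c2 * c3) * (e * e) := by ring
    _ ≤ (c1 * c2 * c3) * (e * 1) := by gcongr
    _ = c1 * c2 * c3 * e := by ring

lemma re_term_bound {z w : ℂ} {χv Cu Cv Cχ e : ℝ} (hz : ‖z‖ ≤ Cu * e) (hw : ‖w‖ ≤ Cv * e)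
    (hχ : |χv| ≤ Cχ) (hCu : 0 ≤ Cu) (hCv : 0 ≤ Cv) (hCχ : 0 ≤ Cχ)
    (he0 : 0 ≤ e) (he1 : e ≤ 1) :
    |2 * (z * (starRingEnd ℂ) w).re * χv| ≤ 2 * Cu * Cv * Cχ * e := by
  have hre : |(z * (starRingEnd ℂ) w).re| ≤ ‖z‖ * ‖w‖ := by
    calc |(z * (starRingEnd ℂ) w).re| ≤ ‖z * (starRingEnd ℂ) w‖ := by
          exact Complex.abs_re_le_norm _
      _ = ‖z‖ * ‖w‖ := by rw [norm_mul, RCLike.norm_conj]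
  rw [abs_mul, abs_mul, abs_two]
  calc 2 * |(z * (starRingEnd ℂ) w).re| * |χv| ≤ 2 * (‖z‖ * ‖w‖) * Cχ := by gcongr
    _ ≤ 2 * ((Cu * e) * (Cv * e)) * Cχ := by gcongr
    _ = 2 * Cu * Cv * Cχ * (e * e) := by ring
    _ ≤ 2 * Cu * Cv * Cχ * (e * 1) := by gcongr
    _ = 2 * Cu * Cv * Cχ * e := by ring

lemma sq_term_bound {w : ℂ} {r Cv Cr e : ℝ} (hw : ‖w‖ ≤ Cv * e) (hr : |r| ≤ Cr)
    (hCv : 0 ≤ Cv) (hCr : 0 ≤ Cr) (he0 : 0 ≤ e) (he1 : e ≤ 1) :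
    |‖w‖ ^ 2 * r| ≤ Cv ^ 2 * Cr * e := by
  rw [abs_mul, abs_of_nonneg (sq_nonneg _)]
  calc ‖w‖ ^ 2 * |r| ≤ (Cv * e) ^ 2 * Cr := by gcongr
    _ = Cv ^ 2 * Cr * (e * e) := by ring
    _ ≤ Cv ^ 2 * Cr * (e * 1) := by gcongr
    _ = Cv ^ 2 * Cr * e := by ring

end ZakharovAux

open ZakharovAux

/-- Differentiation of the localized mass `t ↦ ∫ |u(t,x)|²·χ(t,x) dx` along a solution of the
Schrödinger part `∂_t u = i·∂_x² u − i·n·u` of the Zakharov system on an open interval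
`I = (a,b)`, with exponential decay in `x` and a bounded `C¹` weight `χ`. -/
theorem hasDerivAt_localized_mass (a b : ℝ) (u : ℝ → ℝ → ℂ) (n : ℝ → ℝ → ℝ)
    (χ : ℝ → ℝ → ℝ)
    -- `u` has partial derivatives of order one in `t` and order two in `x` on `I × ℝ`
    (hu_t : ∀ t ∈ Set.Ioo a b, ∀ x : ℝ, DifferentiableAt ℝ (fun s => u s x) t)
    (hu_x : ∀ t ∈ Set.Ioo a b, ∀ x : ℝ, DifferentiableAt ℝ (fun y => u t y) x)
    (hu_xx : ∀ t ∈ Set.Ioo a b, ∀ x : ℝ,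
      DifferentiableAt ℝ (deriv (fun y => u t y)) x)
    -- these partial derivatives (and `u` itself) are continuous on `I × ℝ`
    (hcont_u : ContinuousOn (fun p : ℝ × ℝ => u p.1 p.2) (Set.Ioo a b ×ˢ Set.univ))
    (hcont_ut : ContinuousOn (fun p : ℝ × ℝ => deriv (fun s => u s p.2) p.1)
      (Set.Ioo a b ×ˢ Set.univ))
    (hcont_ux : ContinuousOn (fun p : ℝ × ℝ => deriv (fun y => u p.1 y) p.2)
      (Set.Ioo a b ×ˢ Set.univ))
    (hcont_uxx : ContinuousOn (fun p : ℝ × ℝ => deriv (deriv (fun y => u p.1 y)) p.2)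
      (Set.Ioo a b ×ˢ Set.univ))
    -- `n` is continuous on `I × ℝ`
    (hcont_n : ContinuousOn (fun p : ℝ × ℝ => n p.1 p.2) (Set.Ioo a b ×ˢ Set.univ))
    -- the equation `∂_t u = i ∂_x² u − i n u` holds pointwise on `I × ℝ`
    (heq : ∀ t ∈ Set.Ioo a b, ∀ x : ℝ,
      deriv (fun s => u s x) t =
        Complex.I * deriv (deriv (fun y => u t y)) x -
          Complex.I * ((n t x : ℝ) : ℂ) * u t x)
    -- exponential decay of `u, ∂_x u, ∂_x² u` and boundedness of `n`, locally uniformly in `t`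
    (hdecay : ∀ J : Set ℝ, IsCompact J → J ⊆ Set.Ioo a b →
      ∃ C : ℝ, 0 < C ∧ ∃ δ : ℝ, 0 < δ ∧ ∀ t ∈ J, ∀ x : ℝ,
        ‖u t x‖ + ‖deriv (fun y => u t y) x‖ + ‖deriv (deriv (fun y => u t y)) x‖ ≤
            C * Real.exp (-δ * |x|) ∧
          |n t x| ≤ C)
    -- `χ` is continuously differentiable on `I × ℝ` ...
    (hχ_t : ∀ t ∈ Set.Ioo a b, ∀ x : ℝ, DifferentiableAt ℝ (fun s => χ s x) t)
    (hχ_x : ∀ t ∈ Set.Ioo a b, ∀ x : ℝ, DifferentiableAt ℝ (fun y => χ t y) x)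
    (hcont_χ : ContinuousOn (fun p : ℝ × ℝ => χ p.1 p.2) (Set.Ioo a b ×ˢ Set.univ))
    (hcont_χt : ContinuousOn (fun p : ℝ × ℝ => deriv (fun s => χ s p.2) p.1)
      (Set.Ioo a b ×ˢ Set.univ))
    (hcont_χx : ContinuousOn (fun p : ℝ × ℝ => deriv (fun y => χ p.1 y) p.2)
      (Set.Ioo a b ×ˢ Set.univ))
    -- ... with `χ`, `∂_t χ`, `∂_x χ` bounded on `J × ℝ` for every compact `J ⊆ I`
    (hχ_bdd : ∀ J : Set ℝ, IsCompact J → J ⊆ Set.Ioo a b →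
      ∃ C : ℝ, 0 < C ∧ ∀ t ∈ J, ∀ x : ℝ,
        |χ t x| + |deriv (fun s => χ s x) t| + |deriv (fun y => χ t y) x| ≤ C) :
    ∀ t ∈ Set.Ioo a b,
      HasDerivAt (fun s => ∫ x : ℝ, ‖u s x‖ ^ 2 * χ s x)
        (2 * (∫ x : ℝ, deriv (fun y => u t y) x * (starRingEnd ℂ) (u t x) *
              ((deriv (fun y => χ t y) x : ℝ) : ℂ)).im +
          ∫ x : ℝ, ‖u t x‖ ^ 2 * deriv (fun s => χ s x) t) t := by
  intro t ht
  obtain ⟨hta, htb⟩ := ht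
  have ht : t ∈ Set.Ioo a b := ⟨hta, htb⟩
  set ε : ℝ := min (t - a) (b - t) / 2 with hε_def
  have hεmin : 0 < min (t - a) (b - t) := lt_min (by linarith) (by linarith)
  have hε : 0 < ε := by positivity
  have hm1 : min (t - a) (b - t) ≤ t - a := min_le_left _ _
  have hm2 : min (t - a) (b - t) ≤ b - t := min_le_right _ _
  have hεle1 : ε ≤ (t - a) / 2 := by rw [hε_def]; linarith
  have hεle2 : ε ≤ (b - t) / 2 := by rw [hε_def]; linarith
  have hJsub : Set.Icc (t - ε) (t + ε) ⊆ Set.Ioo a b := by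
    intro s hs
    obtain ⟨hs1, hs2⟩ := hs
    exact ⟨by linarith, by linarith⟩
  have htJ : t ∈ Set.Icc (t - ε) (t + ε) := ⟨by linarith, by linarith⟩
  have hballJ : Metric.ball t ε ⊆ Set.Icc (t - ε) (t + ε) := by
    intro s hs
    rw [Metric.mem_ball, Real.dist_eq] at hs
    have h := abs_lt.mp hs
    exact ⟨by linarith [h.1], by linarith [h.2]⟩
  have hballI : ∀ s ∈ Metric.ball t ε, s ∈ Set.Ioo a b := fun s hs => hJsub (hballJ hs)
  obtain ⟨C, hC, δ, hδ, hCd⟩ := hdecay _ isCompact_Icc hJsub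
  obtain ⟨Cχ, hCχ, hCχb⟩ := hχ_bdd _ isCompact_Icc hJsub
  -- individual decay bounds
  have hu_le : ∀ s ∈ Set.Icc (t - ε) (t + ε), ∀ x, ‖u s x‖ ≤ C * Real.exp (-δ * |x|) := by
    intro s hs x
    have h := (hCd s hs x).1
    have h1 := norm_nonneg (deriv (fun y => u s y) x)
    have h2 := norm_nonneg (deriv (deriv (fun y => u s y)) x)
    linarith
  have hux_le : ∀ s ∈ Set.Icc (t - ε) (t + ε), ∀ x,
      ‖deriv (fun y => u s y) x‖ ≤ C * Real.exp (-δ * |x|) := by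
    intro s hs x
    have h := (hCd s hs x).1
    have h1 := norm_nonneg (u s x)
    have h2 := norm_nonneg (deriv (deriv (fun y => u s y)) x)
    linarith
  have huxx_le : ∀ s ∈ Set.Icc (t - ε) (t + ε), ∀ x,
      ‖deriv (deriv (fun y => u s y)) x‖ ≤ C * Real.exp (-δ * |x|) := by
    intro s hs x
    have h := (hCd s hs x).1
    have h1 := norm_nonneg (u s x)
    have h2 := norm_nonneg (deriv (fun y => u s y) x)
    linarith
  have hn_le : ∀ s ∈ Set.Icc (t - ε) (t + ε), ∀ x, |n s x| ≤ C := fun s hs x => (hCd s hs x).2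
  have hχ_le : ∀ s ∈ Set.Icc (t - ε) (t + ε), ∀ x, |χ s x| ≤ Cχ := by
    intro s hs x
    have h := hCχb s hs x
    have h1 := abs_nonneg (deriv (fun τ => χ τ x) s)
    have h2 := abs_nonneg (deriv (fun y => χ s y) x)
    linarith
  have hχt_le : ∀ s ∈ Set.Icc (t - ε) (t + ε), ∀ x, |deriv (fun τ => χ τ x) s| ≤ Cχ := by
    intro s hs x
    have h := hCχb s hs x
    have h1 := abs_nonneg (χ s x)
    have h2 := abs_nonneg (deriv (fun y => χ s y) x)
    linarith
  have hχx_le : ∀ s ∈ Set.Icc (t - ε) (t + ε), ∀ x, |deriv (fun y => χ s y) x| ≤ Cχ := by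
    intro s hs x
    have h := hCχb s hs x
    have h1 := abs_nonneg (χ s x)
    have h2 := abs_nonneg (deriv (fun τ => χ τ x) s)
    linarith
  have he0 : ∀ x : ℝ, (0:ℝ) ≤ Real.exp (-δ * |x|) := fun x => (Real.exp_pos _).le
  have he1 : ∀ x : ℝ, Real.exp (-δ * |x|) ≤ 1 := fun x => exp_abs_le_one hδ x
  -- bound on the time derivative of u via the equation
  have hut_le : ∀ s ∈ Set.Icc (t - ε) (t + ε), ∀ x,
      ‖deriv (fun τ => u τ x) s‖ ≤ C * (1 + C) * Real.exp (-δ * |x|) := by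
    intro s hs x
    rw [heq s (hJsub hs) x]
    have h1 := huxx_le s hs x
    have h2 := hu_le s hs x
    have h3 := hn_le s hs x
    have h4 := norm_nonneg (u s x)
    calc ‖Complex.I * deriv (deriv (fun y => u s y)) x - Complex.I * ((n s x : ℝ) : ℂ) * u s x‖
        ≤ ‖Complex.I * deriv (deriv (fun y => u s y)) x‖ +
            ‖Complex.I * ((n s x : ℝ) : ℂ) * u s x‖ := norm_sub_le _ _
      _ = ‖deriv (deriv (fun y => u s y)) x‖ + |n s x| * ‖u s x‖ := by
          rw [norm_mul, norm_mul, norm_mul, Complex.norm_I, Complex.norm_real,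
            Real.norm_eq_abs, one_mul, one_mul]
      _ ≤ C * Real.exp (-δ * |x|) + C * (C * Real.exp (-δ * |x|)) :=
          add_le_add h1 (mul_le_mul h3 h2 h4 hC.le)
      _ = C * (1 + C) * Real.exp (-δ * |x|) := by ring
  -- the pointwise time derivative of the integrand
  have hF'deriv : ∀ x : ℝ, ∀ s ∈ Metric.ball t ε,
      HasDerivAt (fun τ => ‖u τ x‖ ^ 2 * χ τ x)
        (2 * (deriv (fun τ => u τ x) s * (starRingEnd ℂ) (u s x)).re * χ s x +
          ‖u s x‖ ^ 2 * deriv (fun τ => χ τ x) s) s := fun x s hs =>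
    hasDerivAt_normSq_mul ((hu_t s (hballI s hs) x).hasDerivAt)
      ((hχ_t s (hballI s hs) x).hasDerivAt)
  set K : ℝ := 2 * (C * (1 + C)) * C * Cχ + C ^ 2 * Cχ with hK
  -- bound for F'
  have hF'bound : ∀ x : ℝ, ∀ s ∈ Metric.ball t ε,
      ‖2 * (deriv (fun τ => u τ x) s * (starRingEnd ℂ) (u s x)).re * χ s x +
          ‖u s x‖ ^ 2 * deriv (fun τ => χ τ x) s‖ ≤ K * Real.exp (-δ * |x|) := by
    intro x s hs
    have hsJ := hballJ hs
    have hA := re_term_bound (hut_le s hsJ x) (hu_le s hsJ x) (hχ_le s hsJ x)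
      (by positivity) hC.le hCχ.le (he0 x) (he1 x)
    have hB := sq_term_bound (hu_le s hsJ x) (hχt_le s hsJ x) hC.le hCχ.le (he0 x) (he1 x)
    calc ‖2 * (deriv (fun τ => u τ x) s * (starRingEnd ℂ) (u s x)).re * χ s x +
          ‖u s x‖ ^ 2 * deriv (fun τ => χ τ x) s‖
        ≤ |2 * (deriv (fun τ => u τ x) s * (starRingEnd ℂ) (u s x)).re * χ s x| +
          |‖u s x‖ ^ 2 * deriv (fun τ => χ τ x) s| := by
          rw [Real.norm_eq_abs]; exact abs_add_le _ _
      _ ≤ 2 * (C * (1 + C)) * C * Cχ * Real.exp (-δ * |x|) +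
          C ^ 2 * Cχ * Real.exp (-δ * |x|) := add_le_add hA hB
      _ = K * Real.exp (-δ * |x|) := by rw [hK]; ring
  -- hypotheses for differentiation under the integral sign
  have harg1 : ∀ᶠ s in nhds t, AEStronglyMeasurable (fun x => ‖u s x‖ ^ 2 * χ s x)
      (volume : Measure ℝ) := by
    refine Filter.eventually_of_mem (Metric.ball_mem_nhds t hε) (fun s hs => ?_)
    exact (((cont_slice hcont_u (hballI s hs)).norm.pow 2).mul
      (cont_slice hcont_χ (hballI s hs))).aestronglyMeasurable
  have harg2 : Integrable (fun x => ‖u t x‖ ^ 2 * χ t x) (volume : Measure ℝ) := by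
    refine integrable_of_decay (K := C ^ 2 * Cχ) hδ
      (((cont_slice hcont_u ht).norm.pow 2).mul (cont_slice hcont_χ ht)) (fun x => ?_)
    rw [Real.norm_eq_abs]
    exact sq_term_bound (hu_le t htJ x) (hχ_le t htJ x) hC.le hCχ.le (he0 x) (he1 x)
  have cu : Continuous fun x => u t x := cont_slice hcont_u ht
  have cux : Continuous fun x => deriv (fun y => u t y) x := cont_slice hcont_ux ht
  have cuxx : Continuous fun x => deriv (deriv (fun y => u t y)) x := cont_slice hcont_uxx ht
  have cut : Continuous fun x => deriv (fun τ => u τ x) t := cont_slice hcont_ut ht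
  have cχ : Continuous fun x => χ t x := cont_slice hcont_χ ht
  have cχt : Continuous fun x => deriv (fun τ => χ τ x) t := cont_slice hcont_χt ht
  have cχx : Continuous fun x => deriv (fun y => χ t y) x := cont_slice hcont_χx ht
  have harg3 : AEStronglyMeasurable (fun x =>
      2 * (deriv (fun τ => u τ x) t * (starRingEnd ℂ) (u t x)).re * χ t x +
        ‖u t x‖ ^ 2 * deriv (fun τ => χ τ x) t) (volume : Measure ℝ) :=
    (((continuous_const.mul (Complex.continuous_re.comp (cut.mul (continuous_star.comp cu)))).mul cχ).add
      ((cu.norm.pow 2).mul cχt)).aestronglyMeasurable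
  have harg4 : ∀ᵐ x ∂(volume : Measure ℝ), ∀ s ∈ Metric.ball t ε,
      ‖2 * (deriv (fun τ => u τ x) s * (starRingEnd ℂ) (u s x)).re * χ s x +
        ‖u s x‖ ^ 2 * deriv (fun τ => χ τ x) s‖ ≤ K * Real.exp (-δ * |x|) :=
    Filter.Eventually.of_forall (fun x => hF'bound x)
  have harg5 : Integrable (fun x => K * Real.exp (-δ * |x|)) (volume : Measure ℝ) :=
    (integrable_exp_neg_abs hδ).const_mul K
  have harg6 : ∀ᵐ x ∂(volume : Measure ℝ), ∀ s ∈ Metric.ball t ε,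
      HasDerivAt (fun τ => ‖u τ x‖ ^ 2 * χ τ x)
        (2 * (deriv (fun τ => u τ x) s * (starRingEnd ℂ) (u s x)).re * χ s x +
          ‖u s x‖ ^ 2 * deriv (fun τ => χ τ x) s) s :=
    Filter.Eventually.of_forall (fun x => hF'deriv x)
  obtain ⟨-, hderiv⟩ := hasDerivAt_integral_of_dominated_loc_of_deriv_le
    (F := fun s x => ‖u s x‖ ^ 2 * χ s x)
    (F' := fun s x => 2 * (deriv (fun τ => u τ x) s * (starRingEnd ℂ) (u s x)).re * χ s x +
      ‖u s x‖ ^ 2 * deriv (fun τ => χ τ x) s)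
    (bound := fun x => K * Real.exp (-δ * |x|))
    (Metric.ball_mem_nhds t hε) harg1 harg2 harg3 harg4 harg5 harg6
  -- integrable terms for the identification of the derivative value
  have hbnd1 : ∀ x : ℝ, ‖deriv (deriv (fun y => u t y)) x * (starRingEnd ℂ) (u t x) *
      ((χ t x : ℝ) : ℂ)‖ ≤ C * C * Cχ * Real.exp (-δ * |x|) := by
    intro x
    rw [norm_mul, norm_mul, RCLike.norm_conj, Complex.norm_real, Real.norm_eq_abs]
    exact prod3_bound (huxx_le t htJ x) (hu_le t htJ x) (hχ_le t htJ x)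
      (norm_nonneg _) (norm_nonneg _) (abs_nonneg _) hC.le hC.le hCχ.le (he0 x) (he1 x)
  have hbnd2 : ∀ x : ℝ, ‖deriv (fun y => u t y) x * (starRingEnd ℂ) (deriv (fun y => u t y) x) *
      ((χ t x : ℝ) : ℂ)‖ ≤ C * C * Cχ * Real.exp (-δ * |x|) := by
    intro x
    rw [norm_mul, norm_mul, RCLike.norm_conj, Complex.norm_real, Real.norm_eq_abs]
    exact prod3_bound (hux_le t htJ x) (hux_le t htJ x) (hχ_le t htJ x)
      (norm_nonneg _) (norm_nonneg _) (abs_nonneg _) hC.le hC.le hCχ.le (he0 x) (he1 x)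
  have hbnd3 : ∀ x : ℝ, ‖deriv (fun y => u t y) x * (starRingEnd ℂ) (u t x) *
      ((deriv (fun y => χ t y) x : ℝ) : ℂ)‖ ≤ C * C * Cχ * Real.exp (-δ * |x|) := by
    intro x
    rw [norm_mul, norm_mul, RCLike.norm_conj, Complex.norm_real, Real.norm_eq_abs]
    exact prod3_bound (hux_le t htJ x) (hu_le t htJ x) (hχx_le t htJ x)
      (norm_nonneg _) (norm_nonneg _) (abs_nonneg _) hC.le hC.le hCχ.le (he0 x) (he1 x)
  have hbndG : ∀ x : ℝ, ‖deriv (fun y => u t y) x * (starRingEnd ℂ) (u t x) *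
      ((χ t x : ℝ) : ℂ)‖ ≤ C * C * Cχ * Real.exp (-δ * |x|) := by
    intro x
    rw [norm_mul, norm_mul, RCLike.norm_conj, Complex.norm_real, Real.norm_eq_abs]
    exact prod3_bound (hux_le t htJ x) (hu_le t htJ x) (hχ_le t htJ x)
      (norm_nonneg _) (norm_nonneg _) (abs_nonneg _) hC.le hC.le hCχ.le (he0 x) (he1 x)
  have I1 : Integrable (fun x => deriv (deriv (fun y => u t y)) x * (starRingEnd ℂ) (u t x) *
      ((χ t x : ℝ) : ℂ)) (volume : Measure ℝ) :=
    integrable_of_decay hδ ((cuxx.mul (continuous_star.comp cu)).mul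
      (Complex.continuous_ofReal.comp cχ)) hbnd1
  have I2 : Integrable (fun x => deriv (fun y => u t y) x *
      (starRingEnd ℂ) (deriv (fun y => u t y) x) * ((χ t x : ℝ) : ℂ)) (volume : Measure ℝ) :=
    integrable_of_decay hδ ((cux.mul (continuous_star.comp cux)).mul
      (Complex.continuous_ofReal.comp cχ)) hbnd2
  have I3 : Integrable (fun x => deriv (fun y => u t y) x * (starRingEnd ℂ) (u t x) *
      ((deriv (fun y => χ t y) x : ℝ) : ℂ)) (volume : Measure ℝ) :=
    integrable_of_decay hδ ((cux.mul (continuous_star.comp cu)).mul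
      (Complex.continuous_ofReal.comp cχx)) hbnd3
  have I4 : Integrable (fun x => ‖u t x‖ ^ 2 * deriv (fun τ => χ τ x) t) (volume : Measure ℝ) := by
    refine integrable_of_decay (K := C ^ 2 * Cχ) hδ ((cu.norm.pow 2).mul cχt) (fun x => ?_)
    rw [Real.norm_eq_abs]
    exact sq_term_bound (hu_le t htJ x) (hχt_le t htJ x) hC.le hCχ.le (he0 x) (he1 x)
  have I5 : Integrable (fun x => 2 * (deriv (fun τ => u τ x) t *
      (starRingEnd ℂ) (u t x)).re * χ t x) (volume : Measure ℝ) := by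
    refine integrable_of_decay (K := 2 * (C * (1 + C)) * C * Cχ) hδ
      ((continuous_const.mul (Complex.continuous_re.comp (cut.mul (continuous_star.comp cu)))).mul cχ)
      (fun x => ?_)
    rw [Real.norm_eq_abs]
    exact re_term_bound (hut_le t htJ x) (hu_le t htJ x) (hχ_le t htJ x)
      (by positivity) hC.le hCχ.le (he0 x) (he1 x)
  -- pointwise rewriting of the first part of F' t using the PDE
  have hpt : ∀ x : ℝ, 2 * (deriv (fun τ => u τ x) t * (starRingEnd ℂ) (u t x)).re * χ t x =
      -2 * ((deriv (deriv (fun y => u t y)) x * (starRingEnd ℂ) (u t x) *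
        ((χ t x : ℝ) : ℂ)).im) := by
    intro x
    rw [heq t ht x]
    simp only [Complex.sub_re, Complex.sub_im, Complex.mul_re, Complex.mul_im, Complex.I_re,
      Complex.I_im, Complex.ofReal_re, Complex.ofReal_im, Complex.conj_re, Complex.conj_im]
    ring
  -- integration by parts
  have hG : ∀ x : ℝ, HasDerivAt
      (fun y => deriv (fun y' => u t y') y * (starRingEnd ℂ) (u t y) * ((χ t y : ℝ) : ℂ))
      (deriv (deriv (fun y => u t y)) x * (starRingEnd ℂ) (u t x) * ((χ t x : ℝ) : ℂ) +
        deriv (fun y => u t y) x * (starRingEnd ℂ) (deriv (fun y => u t y) x) *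
          ((χ t x : ℝ) : ℂ) +
        deriv (fun y => u t y) x * (starRingEnd ℂ) (u t x) *
          ((deriv (fun y => χ t y) x : ℝ) : ℂ)) x := by
    intro x
    have h1 : HasDerivAt (fun y => u t y) (deriv (fun y => u t y) x) x :=
      (hu_x t ht x).hasDerivAt
    have h2 : HasDerivAt (deriv (fun y => u t y)) (deriv (deriv (fun y => u t y)) x) x :=
      (hu_xx t ht x).hasDerivAt
    have h1c : HasDerivAt (fun y => (starRingEnd ℂ) (u t y))
        ((starRingEnd ℂ) (deriv (fun y => u t y) x)) x := h1.star
    have h3 : HasDerivAt (fun y => χ t y) (deriv (fun y => χ t y) x) x :=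
      (hχ_x t ht x).hasDerivAt
    have h3' : HasDerivAt (fun y => ((χ t y : ℝ) : ℂ)) ((deriv (fun y => χ t y) x : ℝ) : ℂ) x :=
      Complex.ofRealCLM.hasFDerivAt.comp_hasDerivAt x h3
    have h := (h2.mul h1c).mul h3'
    convert h using 1
    · rfl
    show _ = _ + deriv (fun y => u t y) x * (starRingEnd ℂ) (u t x) *
      ((deriv (fun y => χ t y) x : ℝ) : ℂ)
    ring
    rfl
  have hGtop : Filter.Tendsto
      (fun y => deriv (fun y' => u t y') y * (starRingEnd ℂ) (u t y) * ((χ t y : ℝ) : ℂ))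
      Filter.atTop (nhds 0) :=
    squeeze_zero_norm hbndG (tendsto_exp_decay_atTop hδ)
  have hGbot : Filter.Tendsto
      (fun y => deriv (fun y' => u t y') y * (starRingEnd ℂ) (u t y) * ((χ t y : ℝ) : ℂ))
      Filter.atBot (nhds 0) :=
    squeeze_zero_norm hbndG (tendsto_exp_decay_atBot hδ)
  have hsum_int : Integrable (fun x =>
      deriv (deriv (fun y => u t y)) x * (starRingEnd ℂ) (u t x) * ((χ t x : ℝ) : ℂ) +
        deriv (fun y => u t y) x * (starRingEnd ℂ) (deriv (fun y => u t y) x) *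
          ((χ t x : ℝ) : ℂ) +
        deriv (fun y => u t y) x * (starRingEnd ℂ) (u t x) *
          ((deriv (fun y => χ t y) x : ℝ) : ℂ)) (volume : Measure ℝ) := (I1.add I2).add I3
  have hIBP : (∫ x : ℝ, deriv (deriv (fun y => u t y)) x * (starRingEnd ℂ) (u t x) *
        ((χ t x : ℝ) : ℂ)) +
      (∫ x : ℝ, deriv (fun y => u t y) x * (starRingEnd ℂ) (deriv (fun y => u t y) x) *
        ((χ t x : ℝ) : ℂ)) +
      (∫ x : ℝ, deriv (fun y => u t y) x * (starRingEnd ℂ) (u t x) *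
        ((deriv (fun y => χ t y) x : ℝ) : ℂ)) = 0 := by
    have hIoi := integral_Ioi_of_hasDerivAt_of_tendsto' (a := (0:ℝ))
      (fun x _ => hG x) hsum_int.integrableOn hGtop
    have hIic := integral_Iic_of_hasDerivAt_of_tendsto' (a := (0:ℝ))
      (fun x _ => hG x) hsum_int.integrableOn hGbot
    have h0 := intervalIntegral.integral_Iic_add_Ioi (b := (0:ℝ)) hsum_int.integrableOn hsum_int.integrableOn
    rw [hIic, hIoi] at h0
    have I12 : Integrable (fun x => deriv (deriv (fun y => u t y)) x * (starRingEnd ℂ) (u t x) *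
        ((χ t x : ℝ) : ℂ) + deriv (fun y => u t y) x *
        (starRingEnd ℂ) (deriv (fun y => u t y) x) * ((χ t x : ℝ) : ℂ)) (volume : Measure ℝ) :=
      I1.add I2
    rw [← integral_add I1 I2, ← integral_add I12 I3]
    rw [← h0]
    ring
  have him2 : (∫ x : ℝ, deriv (fun y => u t y) x * (starRingEnd ℂ) (deriv (fun y => u t y) x) *
      ((χ t x : ℝ) : ℂ)).im = 0 := by
    have h : (∫ x : ℝ, (deriv (fun y => u t y) x * (starRingEnd ℂ) (deriv (fun y => u t y) x) *
        ((χ t x : ℝ) : ℂ)).im) = (∫ x : ℝ, deriv (fun y => u t y) x *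
        (starRingEnd ℂ) (deriv (fun y => u t y) x) * ((χ t x : ℝ) : ℂ)).im :=
      Complex.imCLM.integral_comp_comm I2
    rw [← h]
    have hz : ∀ x : ℝ, (deriv (fun y => u t y) x * (starRingEnd ℂ) (deriv (fun y => u t y) x) *
        ((χ t x : ℝ) : ℂ)).im = 0 := by
      intro x
      simp only [Complex.mul_im, Complex.mul_re, Complex.ofReal_re, Complex.ofReal_im,
        Complex.conj_re, Complex.conj_im]
      ring
    simp only [hz, integral_zero]
  have him1 : (∫ x : ℝ, deriv (deriv (fun y => u t y)) x * (starRingEnd ℂ) (u t x) *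
      ((χ t x : ℝ) : ℂ)).im =
      -(∫ x : ℝ, deriv (fun y => u t y) x * (starRingEnd ℂ) (u t x) *
        ((deriv (fun y => χ t y) x : ℝ) : ℂ)).im := by
    have h := congrArg Complex.im hIBP
    simp only [Complex.add_im, Complex.zero_im] at h
    linarith [him2]
  -- identify the derivative value
  have key : (∫ x : ℝ, (2 * (deriv (fun τ => u τ x) t * (starRingEnd ℂ) (u t x)).re * χ t x +
      ‖u t x‖ ^ 2 * deriv (fun τ => χ τ x) t)) =
      2 * (∫ x : ℝ, deriv (fun y => u t y) x * (starRingEnd ℂ) (u t x) *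
        ((deriv (fun y => χ t y) x : ℝ) : ℂ)).im +
      ∫ x : ℝ, ‖u t x‖ ^ 2 * deriv (fun τ => χ τ x) t := by
    rw [integral_add I5 I4]
    congr 1
    have h1 : (fun x => 2 * (deriv (fun τ => u τ x) t * (starRingEnd ℂ) (u t x)).re * χ t x) =
        fun x => (-2 : ℝ) * ((deriv (deriv (fun y => u t y)) x * (starRingEnd ℂ) (u t x) *
          ((χ t x : ℝ) : ℂ)).im) := by
      funext x
      exact hpt x
    rw [h1, integral_const_mul]
    have h2 : (∫ x : ℝ, ((deriv (deriv (fun y => u t y)) x * (starRingEnd ℂ) (u t x) *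
        ((χ t x : ℝ) : ℂ)).im)) = (∫ x : ℝ, deriv (deriv (fun y => u t y)) x *
        (starRingEnd ℂ) (u t x) * ((χ t x : ℝ) : ℂ)).im :=
      Complex.imCLM.integral_comp_comm I1
    rw [h2, him1]
    ring
  rw [← key]
  exact hderiv
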